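/- Fix T > 0, jump times 0 < t₁ < ⋯ < t_n ≤ T, and two measurable paths X, X̃ : [0,T] → ℝ^K. Let ι be an index type and θ_i : ℝ^K → ℝ (i ∈ ι) measurable with sup_{i} sup_x |θ_i(x)| ≤ θ̄ < ∞, weights w : ι → ℝ with w̲ := inf_i w_i > 0, B̄ > 0 and B̄_w := B̄/w̲. Then sup_{g ∈ ℒ(B̄)} | L_T(g; X̃) − L_T(g; X) | ≤ B̄_w·(1 + e^{B̄_w θ̄}) · sup_{i∈ι} [ ∑_{j=1}^n |θ_i(X̃(t_j)) − θ_i(X(t_j))| + ∫_0^T |θ_i(X̃(t)) − θ_i(X(t))| dt ]. -/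

import Mathlib

open MeasureTheory

/-- The sample log-likelihood `L_T(g; Y) = ∑ⱼ g(Y(tⱼ)) - ∫₀ᵀ exp(g(Y(t))) dt`
computed from the path `Y`. -/
noncomputable def sampleLogLik (K : ℕ) (T : ℝ) (n : ℕ) (t : Fin n → ℝ)
    (Y : ℝ → (Fin K → ℝ)) (g : (Fin K → ℝ) → ℝ) : ℝ :=
  (∑ i, g (Y (t i))) - ∫ s in (0 : ℝ)..T, Real.exp (g (Y s))

/-- Auxiliary: a pointwise-summable series of measurable functions over a countable
index type has a measurable sum. -/
lemma aux_measurable_tsum {α : Type*} [MeasurableSpace α] {ι : Type*} [Countable ι]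
    {f : ι → α → ℝ} (hf : ∀ i, Measurable (f i)) (hs : ∀ x, Summable fun i => f i x) :
    Measurable fun x => ∑' i, f i x := by
  apply measurable_of_tendsto_metrizable' (Filter.atTop : Filter (Finset ι))
    (f := fun F x => ∑ i ∈ F, f i x)
  · exact fun F => F.measurable_sum fun i _ => hf i
  · rw [tendsto_pi_nhds]
    intro x
    exact (hs x).hasSum

/-- Auxiliary: exponential is Lipschitz with constant `exp C` on `[-C, C]`. -/
lemma aux_exp_lip {u v C : ℝ} (hu : |u| ≤ C) (hv : |v| ≤ C) :
    |Real.exp u - Real.exp v| ≤ Real.exp C * |u - v| := by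
  wlog h : v ≤ u generalizing u v
  · rw [abs_sub_comm, abs_sub_comm u v]
    exact this hv hu (le_of_not_ge h)
  rw [abs_of_nonneg (sub_nonneg.2 (Real.exp_le_exp.2 h)), abs_of_nonneg (sub_nonneg.2 h)]
  have h2 : (v - u) + 1 ≤ Real.exp (v - u) := Real.add_one_le_exp _
  have h3 : Real.exp u * ((v - u) + 1) ≤ Real.exp u * Real.exp (v - u) :=
    mul_le_mul_of_nonneg_left h2 (Real.exp_pos u).le
  rw [← Real.exp_add] at h3
  have h4 : u + (v - u) = v := by ring
  rw [h4] at h3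
  -- exp u - exp v ≤ exp u * (u - v)
  have h5 : Real.exp u - Real.exp v ≤ Real.exp u * (u - v) := by nlinarith
  have h6 : Real.exp u ≤ Real.exp C := Real.exp_le_exp.2 (le_trans (le_abs_self u) hu)
  nlinarith [sub_nonneg.2 h, Real.exp_pos u]

/-- Deterministic stability estimate from the proof of Corollary A.1: for any
`g = ∑ᵢ bᵢ θᵢ ∈ ℒ(B̄)` and any `S` dominating
`supᵢ [∑ⱼ |θᵢ(X̃(tⱼ)) - θᵢ(X(tⱼ))| + ∫₀ᵀ |θᵢ(X̃(t)) - θᵢ(X(t))| dt]`,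
`|L_T(g; X̃) - L_T(g; X)| ≤ B̄_w (1 + e^{B̄_w θ̄}) S`, where `B̄_w = B̄ / w̲`. -/
theorem stmt_12 (K : ℕ) (T : ℝ) (hT : 0 < T) (n : ℕ) (tj : Fin n → ℝ)
    (htj : StrictMono tj) (htj0 : ∀ i, 0 < tj i) (htjT : ∀ i, tj i ≤ T)
    (X Xt : ℝ → (Fin K → ℝ)) (hX : Measurable X) (hXt : Measurable Xt)
    {ι : Type*} (θ : ι → (Fin K → ℝ) → ℝ) (hθmeas : ∀ i, Measurable (θ i))
    (θbar : ℝ) (hθbd : ∀ i x, |θ i x| ≤ θbar)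
    (w : ι → ℝ) (wlow : ℝ) (hwlow : IsGLB (Set.range w) wlow) (hwpos : 0 < wlow)
    (Bbar : ℝ) (hBbar : 0 < Bbar)
    (S : ℝ)
    (hS : ∀ i, (∑ j, |θ i (Xt (tj j)) - θ i (X (tj j))|) +
        (∫ s in (0 : ℝ)..T, |θ i (Xt s) - θ i (X s)|) ≤ S) :
    ∀ b : ι → ℝ, Summable (fun i => w i * |b i|) → (∑' i, w i * |b i|) ≤ Bbar →
      |sampleLogLik K T n tj Xt (fun x => ∑' i, b i * θ i x) -
          sampleLogLik K T n tj X (fun x => ∑' i, b i * θ i x)| ≤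
        Bbar / wlow * (1 + Real.exp (Bbar / wlow * θbar)) * S := by
  intro b hbsum hble
  set Bw := Bbar / wlow with hBwdef
  have hιne : Nonempty ι := by
    by_contra h
    rw [not_nonempty_iff] at h
    have hre : Set.range w = ∅ := Set.range_eq_empty w
    rw [hre] at hwlow
    have h1 : wlow + 1 ∈ lowerBounds (∅ : Set ℝ) := by simp [lowerBounds]
    have := hwlow.2 h1
    linarith
  obtain ⟨i0⟩ := hιne
  have hθ0 : 0 ≤ θbar := le_trans (abs_nonneg _) (hθbd i0 0)
  have hwle : ∀ i, wlow ≤ w i := fun i => hwlow.1 ⟨i, rfl⟩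
  have habs : Summable fun i => |b i| := by
    apply Summable.of_nonneg_of_le (fun i => abs_nonneg _) (fun i => ?_)
      (hbsum.mul_left wlow⁻¹)
    calc |b i| = wlow⁻¹ * (wlow * |b i|) := by field_simp
      _ ≤ wlow⁻¹ * (w i * |b i|) :=
          mul_le_mul_of_nonneg_left
            (mul_le_mul_of_nonneg_right (hwle i) (abs_nonneg _)) (inv_nonneg.2 hwpos.le)
  have htsum_abs : (∑' i, |b i|) ≤ Bw := by
    rw [hBwdef, le_div_iff₀ hwpos]
    calc (∑' i, |b i|) * wlow = ∑' i, |b i| * wlow := tsum_mul_right.symm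
      _ ≤ ∑' i, w i * |b i| := by
          apply Summable.tsum_le_tsum (fun i => ?_) (habs.mul_right wlow) hbsum
          rw [mul_comm]
          exact mul_le_mul_of_nonneg_right (hwle i) (abs_nonneg _)
      _ ≤ Bbar := hble
  have hBw0 : 0 < Bw := div_pos hBbar hwpos
  set g : (Fin K → ℝ) → ℝ := fun x => ∑' i, b i * θ i x with hgdef
  set C := Bw * θbar with hCdef
  have habs2 : ∀ (i : ι) (y z : Fin K → ℝ), |θ i y - θ i z| ≤ 2 * θbar := by
    intro i y z
    calc |θ i y - θ i z| ≤ |θ i y| + |θ i z| := abs_sub _ _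
      _ ≤ θbar + θbar := add_le_add (hθbd _ _) (hθbd _ _)
      _ = 2 * θbar := by ring
  have habsθ : ∀ x, Summable fun i => |b i * θ i x| := by
    intro x
    apply Summable.of_nonneg_of_le (fun i => abs_nonneg _) (fun i => ?_)
      (habs.mul_right θbar)
    rw [abs_mul]
    exact mul_le_mul_of_nonneg_left (hθbd i x) (abs_nonneg _)
  have hsum : ∀ x, Summable fun i => b i * θ i x := fun x => (habsθ x).of_abs
  have hgbd : ∀ x, |g x| ≤ C := by
    intro x
    calc |g x| ≤ ∑' i, |b i| * |θ i x| := by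
          simpa [Real.norm_eq_abs, abs_mul] using
            norm_tsum_le_tsum_norm (f := fun i => b i * θ i x)
              (by simpa [Real.norm_eq_abs, abs_mul] using habsθ x)
      _ ≤ ∑' i, |b i| * θbar := by
          apply Summable.tsum_le_tsum (fun i => ?_) (by simpa [abs_mul] using habsθ x)
            (habs.mul_right θbar)
          exact mul_le_mul_of_nonneg_left (hθbd i x) (abs_nonneg _)
      _ = (∑' i, |b i|) * θbar := tsum_mul_right
      _ ≤ C := mul_le_mul_of_nonneg_right htsum_abs hθ0
  have hdabs : ∀ y z : Fin K → ℝ, Summable fun i => |b i| * |θ i y - θ i z| := by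
    intro y z
    apply Summable.of_nonneg_of_le (fun i => mul_nonneg (abs_nonneg _) (abs_nonneg _))
      (fun i => ?_) (habs.mul_right (2 * θbar))
    exact mul_le_mul_of_nonneg_left (habs2 i y z) (abs_nonneg _)
  have hgdiff : ∀ y z : Fin K → ℝ, |g y - g z| ≤ ∑' i, |b i| * |θ i y - θ i z| := by
    intro y z
    have h1 : g y - g z = ∑' i, (b i * θ i y - b i * θ i z) :=
      (Summable.tsum_sub (hsum y) (hsum z)).symm
    rw [h1]
    have h2 : Summable fun i => ‖b i * θ i y - b i * θ i z‖ := by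
      simpa [Real.norm_eq_abs, ← mul_sub, abs_mul] using hdabs y z
    calc |∑' i, (b i * θ i y - b i * θ i z)|
        ≤ ∑' i, |b i * θ i y - b i * θ i z| := by
          simpa [Real.norm_eq_abs] using
            norm_tsum_le_tsum_norm (f := fun i => b i * θ i y - b i * θ i z) h2
      _ = ∑' i, |b i| * |θ i y - θ i z| := by
          apply tsum_congr
          intro i
          rw [← mul_sub, abs_mul]
  -- countable support and measurability of g
  have hb : Summable b := habs.of_abs
  have hcnt : (Function.support b).Countable := hb.countable_support
  haveI := hcnt.to_subtype
  set s : Set ι := Function.support b with hsdef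
  have hsupp : ∀ x : Fin K → ℝ,
      Function.support (fun i => b i * θ i x) ⊆ s := by
    intro x i hi
    simp only [Function.mem_support] at hi ⊢
    intro hbi
    exact hi (by rw [hbi, zero_mul])
  have hgmeas : Measurable g := by
    have hrw : g = fun x => ∑' (i : s), b i * θ i x := by
      funext x
      exact (tsum_subtype_eq_of_support_subset (hsupp x)).symm
    rw [hrw]
    exact aux_measurable_tsum (fun i => (hθmeas i).const_mul (b i))
      (fun x => (hsum x).subtype s)
  -- nonnegativity of S
  have hSnn : 0 ≤ S :=
    le_trans
      (add_nonneg (Finset.sum_nonneg fun j _ => abs_nonneg _)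
        (intervalIntegral.integral_nonneg hT.le fun t _ => abs_nonneg _))
      (hS i0)
  -- Part A: jump-sum part
  have partA : |(∑ j, g (Xt (tj j))) - ∑ j, g (X (tj j))| ≤ Bw * S := by
    rw [← Finset.sum_sub_distrib]
    calc |∑ j, (g (Xt (tj j)) - g (X (tj j)))|
        ≤ ∑ j, |g (Xt (tj j)) - g (X (tj j))| := Finset.abs_sum_le_sum_abs _ _
      _ ≤ ∑ j, ∑' i, |b i| * |θ i (Xt (tj j)) - θ i (X (tj j))| :=
          Finset.sum_le_sum fun j _ => hgdiff _ _
      _ = ∑' i, ∑ j, |b i| * |θ i (Xt (tj j)) - θ i (X (tj j))| :=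
          (Summable.tsum_finsetSum fun j _ => hdabs _ _).symm
      _ ≤ ∑' i, |b i| * S := by
          have hle : ∀ i, (∑ j, |b i| * |θ i (Xt (tj j)) - θ i (X (tj j))|) ≤ |b i| * S := by
            intro i
            rw [← Finset.mul_sum]
            apply mul_le_mul_of_nonneg_left ?_ (abs_nonneg _)
            have h1 := hS i
            have h2 : 0 ≤ ∫ u in (0:ℝ)..T, |θ i (Xt u) - θ i (X u)| :=
              intervalIntegral.integral_nonneg hT.le fun t _ => abs_nonneg _
            linarith
          have hsm : Summable fun i => ∑ j, |b i| * |θ i (Xt (tj j)) - θ i (X (tj j))| := by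
            apply Summable.of_nonneg_of_le
              (fun i => Finset.sum_nonneg fun j _ => mul_nonneg (abs_nonneg _) (abs_nonneg _))
              (fun i => ?_) (habs.mul_right (n * (2 * θbar)))
            rw [← Finset.mul_sum]
            apply mul_le_mul_of_nonneg_left ?_ (abs_nonneg _)
            calc ∑ j, |θ i (Xt (tj j)) - θ i (X (tj j))|
                ≤ ∑ _j : Fin n, (2 * θbar) := Finset.sum_le_sum fun j _ => habs2 i _ _
              _ = n * (2 * θbar) := by
                  simp [Finset.sum_const, Finset.card_univ, nsmul_eq_mul]
          exact Summable.tsum_le_tsum hle hsm (habs.mul_right S)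
      _ = (∑' i, |b i|) * S := tsum_mul_right
      _ ≤ Bw * S := mul_le_mul_of_nonneg_right htsum_abs hSnn
  -- Part B: integral part
  set μ : Measure ℝ := volume.restrict (Set.Ioc (0:ℝ) T) with hμdef
  have hμuniv : μ Set.univ = ENNReal.ofReal T := by
    rw [hμdef, Measure.restrict_apply_univ, Real.volume_Ioc, sub_zero]
  haveI : IsFiniteMeasure μ := by
    constructor
    rw [hμuniv]
    exact ENNReal.ofReal_lt_top
  set Φ : ℝ → ℝ := fun t => ∑' (i : s), |b i| * |θ i (Xt t) - θ i (X t)| with hΦdef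
  have hsupp2 : ∀ t : ℝ,
      Function.support (fun i => |b i| * |θ i (Xt t) - θ i (X t)|) ⊆ s := by
    intro t i hi
    simp only [Function.mem_support] at hi ⊢
    intro hbi
    exact hi (by rw [hbi, abs_zero, zero_mul])
  have hΦ_eq : ∀ t, (∑' i, |b i| * |θ i (Xt t) - θ i (X t)|) = Φ t := fun t =>
    (tsum_subtype_eq_of_support_subset (hsupp2 t)).symm
  have hΦmeas : Measurable Φ := by
    apply aux_measurable_tsum
      (f := fun (i : s) t => |b i| * |θ i (Xt t) - θ i (X t)|)
    · intro i
      exact ((((hθmeas i).comp hXt).sub ((hθmeas i).comp hX)).abs).const_mul _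
    · intro t
      exact (hdabs (Xt t) (X t)).subtype s
  have hbs_eq : (∑' (i : s), |b i|) = ∑' i, |b i| := by
    apply tsum_subtype_eq_of_support_subset (f := fun i => |b i|)
    intro i hi
    simp only [Function.mem_support] at hi ⊢
    intro hbi
    exact hi (by rw [hbi, abs_zero])
  have hΦbd : ∀ t, Φ t ≤ Bw * (2 * θbar) := by
    intro t
    calc Φ t ≤ ∑' (i : s), |b i| * (2 * θbar) := by
          apply Summable.tsum_le_tsum (fun i => ?_) ((hdabs (Xt t) (X t)).subtype s)
            ((habs.mul_right (2 * θbar)).subtype s)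
          exact mul_le_mul_of_nonneg_left (habs2 _ _ _) (abs_nonneg _)
      _ = (∑' (i : s), |b i|) * (2 * θbar) := tsum_mul_right
      _ = (∑' i, |b i|) * (2 * θbar) := by rw [hbs_eq]
      _ ≤ Bw * (2 * θbar) := by
          apply mul_le_mul_of_nonneg_right htsum_abs
          positivity
  have hΦnn : ∀ t, 0 ≤ Φ t := fun t =>
    tsum_nonneg fun i => mul_nonneg (abs_nonneg _) (abs_nonneg _)
  -- integrability
  have hintXt : Integrable (fun t => Real.exp (g (Xt t))) μ := by
    apply Integrable.mono' (integrable_const (Real.exp C))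
      ((Real.measurable_exp.comp (hgmeas.comp hXt)).aestronglyMeasurable)
    filter_upwards with t
    simp only [Function.comp_apply, Real.norm_eq_abs, Real.abs_exp]
    exact Real.exp_le_exp.2 (le_trans (le_abs_self _) (hgbd _))
  have hintX : Integrable (fun t => Real.exp (g (X t))) μ := by
    apply Integrable.mono' (integrable_const (Real.exp C))
      ((Real.measurable_exp.comp (hgmeas.comp hX)).aestronglyMeasurable)
    filter_upwards with t
    simp only [Function.comp_apply, Real.norm_eq_abs, Real.abs_exp]
    exact Real.exp_le_exp.2 (le_trans (le_abs_self _) (hgbd _))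
  have hintΦ : Integrable Φ μ := by
    apply Integrable.mono' (integrable_const (Bw * (2 * θbar))) hΦmeas.aestronglyMeasurable
    filter_upwards with t
    simp only [Real.norm_eq_abs]
    rw [abs_of_nonneg (hΦnn t)]
    exact hΦbd t
  have hφmeas : ∀ i : s, Measurable fun t => |b (i:ι)| * |θ (i:ι) (Xt t) - θ (i:ι) (X t)| :=
    fun i => ((((hθmeas i).comp hXt).sub ((hθmeas i).comp hX)).abs).const_mul _
  have hφint : ∀ i : s, Integrable (fun t => |b (i:ι)| * |θ (i:ι) (Xt t) - θ (i:ι) (X t)|) μ := by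
    intro i
    apply Integrable.mono' (integrable_const (|b (i:ι)| * (2 * θbar)))
      (hφmeas i).aestronglyMeasurable
    filter_upwards with t
    simp only [Real.norm_eq_abs]
    rw [abs_of_nonneg (mul_nonneg (abs_nonneg _) (abs_nonneg _))]
    exact mul_le_mul_of_nonneg_left (habs2 _ _ _) (abs_nonneg _)
  -- swap integral and sum
  have hswap : ∫ t, Φ t ∂μ =
      ∑' (i : s), ∫ t, |b (i:ι)| * |θ (i:ι) (Xt t) - θ (i:ι) (X t)| ∂μ := by
    apply integral_tsum (fun i => (hφmeas i).aestronglyMeasurable)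
    have hbound : ∀ i : s,
        (∫⁻ t, ‖|b (i:ι)| * |θ (i:ι) (Xt t) - θ (i:ι) (X t)|‖₊ ∂μ) ≤
          ENNReal.ofReal (|b (i:ι)| * (2 * θbar) * T) := by
      intro i
      calc (∫⁻ t, ‖|b (i:ι)| * |θ (i:ι) (Xt t) - θ (i:ι) (X t)|‖₊ ∂μ)
          ≤ ∫⁻ _t, ENNReal.ofReal (|b (i:ι)| * (2 * θbar)) ∂μ := by
            apply lintegral_mono
            intro t
            dsimp only
            rw [← enorm_eq_nnnorm, Real.enorm_eq_ofReal (mul_nonneg (abs_nonneg _) (abs_nonneg _))]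
            exact ENNReal.ofReal_le_ofReal
              (mul_le_mul_of_nonneg_left (habs2 _ _ _) (abs_nonneg _))
        _ = ENNReal.ofReal (|b (i:ι)| * (2 * θbar)) * μ Set.univ := lintegral_const _
        _ = ENNReal.ofReal (|b (i:ι)| * (2 * θbar) * T) := by
            rw [hμuniv, ← ENNReal.ofReal_mul (by positivity)]
    apply ne_top_of_le_ne_top ?_ (ENNReal.tsum_le_tsum hbound)
    rw [← ENNReal.ofReal_tsum_of_nonneg (fun i => by positivity)
      (by
        have : Summable fun i : s => |b (i:ι)| * (2 * θbar * T) :=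
          (habs.mul_right (2 * θbar * T)).subtype s
        simpa [mul_assoc] using this)]
    exact ENNReal.ofReal_ne_top
  -- each integral term is bounded
  have hterm : ∀ i : s,
      (∫ t, |b (i:ι)| * |θ (i:ι) (Xt t) - θ (i:ι) (X t)| ∂μ) ≤ |b (i:ι)| * S := by
    intro i
    rw [integral_const_mul]
    apply mul_le_mul_of_nonneg_left ?_ (abs_nonneg _)
    have h1 := hS (i:ι)
    have h2 : (∫ u in (0:ℝ)..T, |θ (i:ι) (Xt u) - θ (i:ι) (X u)|) =
        ∫ t, |θ (i:ι) (Xt t) - θ (i:ι) (X t)| ∂μ := by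
      rw [intervalIntegral.integral_of_le hT.le, hμdef]
    have h3 : 0 ≤ ∑ j, |θ (i:ι) (Xt (tj j)) - θ (i:ι) (X (tj j))| :=
      Finset.sum_nonneg fun j _ => abs_nonneg _
    rw [← h2]
    linarith
  have hterm_int_bd : ∀ i : s,
      (∫ t, |b (i:ι)| * |θ (i:ι) (Xt t) - θ (i:ι) (X t)| ∂μ) ≤ |b (i:ι)| * (2 * θbar * T) := by
    intro i
    calc (∫ t, |b (i:ι)| * |θ (i:ι) (Xt t) - θ (i:ι) (X t)| ∂μ)
        ≤ ∫ _t, |b (i:ι)| * (2 * θbar) ∂μ := by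
          apply integral_mono (hφint i) (integrable_const _)
          intro t
          exact mul_le_mul_of_nonneg_left (habs2 _ _ _) (abs_nonneg _)
      _ = (μ Set.univ).toReal * (|b (i:ι)| * (2 * θbar)) := by
          rw [integral_const, smul_eq_mul, measureReal_def]
      _ = |b (i:ι)| * (2 * θbar * T) := by
          rw [hμuniv, ENNReal.toReal_ofReal hT.le]; ring
  have hsum_int : Summable fun i : s => ∫ t, |b (i:ι)| * |θ (i:ι) (Xt t) - θ (i:ι) (X t)| ∂μ := by
    apply Summable.of_nonneg_of_le
      (fun i => integral_nonneg fun t => mul_nonneg (abs_nonneg _) (abs_nonneg _))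
      hterm_int_bd ((habs.mul_right (2 * θbar * T)).subtype s)
  have partB : |(∫ u in (0:ℝ)..T, Real.exp (g (Xt u))) -
      ∫ u in (0:ℝ)..T, Real.exp (g (X u))| ≤ Real.exp C * (Bw * S) := by
    rw [intervalIntegral.integral_of_le hT.le, intervalIntegral.integral_of_le hT.le]
    have hμint : |(∫ t, Real.exp (g (Xt t)) ∂μ) - ∫ t, Real.exp (g (X t)) ∂μ| ≤
        ∫ t, Real.exp C * Φ t ∂μ := by
      rw [← integral_sub hintXt hintX]
      calc |∫ t, (Real.exp (g (Xt t)) - Real.exp (g (X t))) ∂μ|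
          ≤ ∫ t, |Real.exp (g (Xt t)) - Real.exp (g (X t))| ∂μ := by
            simpa [Real.norm_eq_abs] using
              norm_integral_le_integral_norm (μ := μ)
                (f := fun t => Real.exp (g (Xt t)) - Real.exp (g (X t)))
        _ ≤ ∫ t, Real.exp C * Φ t ∂μ := by
            apply integral_mono ((hintXt.sub hintX).abs) (hintΦ.const_mul _)
            intro t
            calc |Real.exp (g (Xt t)) - Real.exp (g (X t))|
                ≤ Real.exp C * |g (Xt t) - g (X t)| := aux_exp_lip (hgbd _) (hgbd _)
              _ ≤ Real.exp C * Φ t := by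
                  apply mul_le_mul_of_nonneg_left ?_ (Real.exp_pos C).le
                  rw [← hΦ_eq t]
                  exact hgdiff _ _
    have hΦle : (∫ t, Φ t ∂μ) ≤ Bw * S := by
      rw [hswap]
      calc (∑' (i : s), ∫ t, |b (i:ι)| * |θ (i:ι) (Xt t) - θ (i:ι) (X t)| ∂μ)
          ≤ ∑' (i : s), |b (i:ι)| * S :=
            Summable.tsum_le_tsum hterm hsum_int ((habs.mul_right S).subtype s)
        _ = (∑' (i : s), |b (i:ι)|) * S := tsum_mul_right
        _ = (∑' i, |b i|) * S := by rw [hbs_eq]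
        _ ≤ Bw * S := mul_le_mul_of_nonneg_right htsum_abs hSnn
    calc |(∫ t in Set.Ioc (0:ℝ) T, Real.exp (g (Xt t))) -
        ∫ t in Set.Ioc (0:ℝ) T, Real.exp (g (X t))| ≤ ∫ t, Real.exp C * Φ t ∂μ := hμint
      _ = Real.exp C * ∫ t, Φ t ∂μ := integral_const_mul _ _
      _ ≤ Real.exp C * (Bw * S) :=
          mul_le_mul_of_nonneg_left hΦle (Real.exp_pos C).le
  -- combine
  simp only [sampleLogLik]
  have hre : ((∑ j, g (Xt (tj j))) - ∫ u in (0:ℝ)..T, Real.exp (g (Xt u))) -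
      ((∑ j, g (X (tj j))) - ∫ u in (0:ℝ)..T, Real.exp (g (X u))) =
      ((∑ j, g (Xt (tj j))) - ∑ j, g (X (tj j))) -
      ((∫ u in (0:ℝ)..T, Real.exp (g (Xt u))) - ∫ u in (0:ℝ)..T, Real.exp (g (X u))) := by
    ring
  rw [hre]
  calc |((∑ j, g (Xt (tj j))) - ∑ j, g (X (tj j))) -
      ((∫ u in (0:ℝ)..T, Real.exp (g (Xt u))) - ∫ u in (0:ℝ)..T, Real.exp (g (X u)))|
      ≤ |(∑ j, g (Xt (tj j))) - ∑ j, g (X (tj j))| +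
        |(∫ u in (0:ℝ)..T, Real.exp (g (Xt u))) - ∫ u in (0:ℝ)..T, Real.exp (g (X u))| :=
        abs_sub _ _
    _ ≤ Bw * S + Real.exp C * (Bw * S) := add_le_add partA partB
    _ = Bw * (1 + Real.exp C) * S := by ring
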